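/- Let K be a convex body in ℝⁿ containing the origin in its interior. Suppose there is a positive integer k₀ such that for every integer k ≥ k₀, the functions x ↦ ‖x‖_K^{2k} + ‖−x‖_K^{2k} and x ↦ ‖x‖_K^{2k+1} − ‖−x‖_K^{2k+1} are homogeneous polynomial functions on ℝⁿ (of degrees 2k and 2k+1 respectively). Then there is a quadratic polynomial B, positive on ℝⁿ \ {0}, such that ‖x‖_K · ‖−x‖_K = B(x) for all x ∈ ℝⁿ; equivalently, the origin-symmetric star body L defined by ‖x‖_L = √(‖x‖_K ‖−x‖_K) is an ellipsoid centered at the origin. -/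

import Mathlib

open MvPolynomial

private lemma eval_smul_of_isHomogeneous {n d : ℕ} {p : MvPolynomial (Fin n) ℝ}
    (hp : p.IsHomogeneous d) (t : ℝ) (x : Fin n → ℝ) :
    eval (fun i => t * x i) p = t ^ d * eval x p := by
  rw [eval_eq, eval_eq, Finset.mul_sum]
  refine Finset.sum_congr rfl fun c hc => ?_
  have hdeg : (∑ i ∈ c.support, c i) = d := by
    by_contra hne
    exact mem_support_iff.mp hc (hp.coeff_eq_zero (by simpa [Finsupp.degree_apply] using hne))
  calc coeff c p * ∏ i ∈ c.support, (t * x i) ^ c i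
      = coeff c p * ((∏ i ∈ c.support, t ^ c i) * ∏ i ∈ c.support, x i ^ c i) := by
        rw [← Finset.prod_mul_distrib]
        simp [mul_pow]
    _ = t ^ d * (coeff c p * ∏ i ∈ c.support, x i ^ c i) := by
        rw [Finset.prod_pow_eq_pow_sum, hdeg]; ring

private lemma coeff_two_of_eq_on_nonneg {N : ℕ} (a : ℕ → ℝ) (b : ℝ) (hN : 2 < N)
    (h : ∀ t : ℝ, 0 ≤ t → ∑ i ∈ Finset.range N, a i * t ^ i = b * t ^ 2) :
    a 2 = b := by
  have hpq : (∑ i ∈ Finset.range N, Polynomial.C (a i) * Polynomial.X ^ i) =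
      Polynomial.C b * Polynomial.X ^ 2 := by
    apply Polynomial.eq_of_infinite_eval_eq
    refine Set.Infinite.mono ?_ (Set.Ici_infinite (0 : ℝ))
    intro t ht
    simp only [Set.mem_setOf_eq, Polynomial.eval_finset_sum, Polynomial.eval_mul,
      Polynomial.eval_C, Polynomial.eval_pow, Polynomial.eval_X]
    exact h t ht
  have hc := congrArg (fun p => Polynomial.coeff p 2) hpq
  simp only [Polynomial.finset_sum_coeff, Polynomial.coeff_C_mul, Polynomial.coeff_X_pow] at hc
  simp only [mul_ite, mul_one, mul_zero, if_true] at hc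
  rw [Finset.sum_ite_eq (Finset.range N) 2 a, if_pos (Finset.mem_range.mpr hN)] at hc
  exact hc

theorem product_of_gauges_is_quadratic (n : ℕ)
    (K : Set (EuclideanSpace ℝ (Fin n)))
    (hcomp : IsCompact K) (hconv : Convex ℝ K)
    (h0 : (0 : EuclideanSpace ℝ (Fin n)) ∈ interior K)
    (k₀ : ℕ) (hk₀ : 0 < k₀)
    (heven : ∀ k : ℕ, k₀ ≤ k → ∃ p : MvPolynomial (Fin n) ℝ,
      p.IsHomogeneous (2 * k) ∧
      ∀ x : EuclideanSpace ℝ (Fin n),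
        gauge K x ^ (2 * k) + gauge K (-x) ^ (2 * k) = eval (fun i => x i) p)
    (hodd : ∀ k : ℕ, k₀ ≤ k → ∃ q : MvPolynomial (Fin n) ℝ,
      q.IsHomogeneous (2 * k + 1) ∧
      ∀ x : EuclideanSpace ℝ (Fin n),
        gauge K x ^ (2 * k + 1) - gauge K (-x) ^ (2 * k + 1) = eval (fun i => x i) q) :
    ∃ B : MvPolynomial (Fin n) ℝ, B.IsHomogeneous 2 ∧
      (∀ x : EuclideanSpace ℝ (Fin n), x ≠ 0 → 0 < eval (fun i => x i) B) ∧
      ∀ x : EuclideanSpace ℝ (Fin n),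
        gauge K x * gauge K (-x) = eval (fun i => x i) B := by
  classical
  have habs : Absorbent ℝ K := absorbent_nhds_zero (mem_interior_iff_mem_nhds.mp h0)
  obtain ⟨R, hR, hKR⟩ := hcomp.isBounded.subset_ball_lt 0 0
  have hgpos : ∀ x : EuclideanSpace ℝ (Fin n), x ≠ 0 → 0 < gauge K x := by
    intro x hx
    have h1 : gauge (Metric.ball (0 : EuclideanSpace ℝ (Fin n)) R) x ≤ gauge K x :=
      gauge_mono habs hKR x
    have h2 : gauge (Metric.ball (0 : EuclideanSpace ℝ (Fin n)) R) x = ‖x‖ / R :=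
      gauge_ball hR.le x
    have h3 : 0 < ‖x‖ / R := div_pos (norm_pos_iff.mpr hx) hR
    linarith
  set h : EuclideanSpace ℝ (Fin n) → ℝ := fun x => gauge K x * gauge K (-x) with hh
  have hpos : ∀ x, x ≠ 0 → 0 < h x := fun x hx =>
    mul_pos (hgpos x hx) (hgpos (-x) (neg_ne_zero.mpr hx))
  obtain ⟨p₁, -, hp₁⟩ := heven k₀ le_rfl
  obtain ⟨p₂, -, hp₂⟩ := heven (2 * k₀) (by omega)
  obtain ⟨q₁, -, hq₁⟩ := hodd k₀ le_rfl
  obtain ⟨p₃, -, hp₃⟩ := heven (2 * k₀ + 1) (by omega)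
  set P : MvPolynomial (Fin n) ℝ := C (1/2 : ℝ) * (p₁ ^ 2 - p₂) with hPdef
  set Q : MvPolynomial (Fin n) ℝ := C (1/2 : ℝ) * (p₃ - q₁ ^ 2) with hQdef
  have hPe : ∀ x : EuclideanSpace ℝ (Fin n), eval (fun i => x i) P = h x ^ (2 * k₀) := by
    intro x
    have ha : gauge K x ^ (2 * (2 * k₀)) = (gauge K x ^ (2 * k₀)) ^ 2 := by
      rw [← pow_mul, Nat.mul_comm]
    have hb : gauge K (-x) ^ (2 * (2 * k₀)) = (gauge K (-x) ^ (2 * k₀)) ^ 2 := by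
      rw [← pow_mul, Nat.mul_comm]
    have : eval (fun i => x i) P =
        (1/2 : ℝ) * ((gauge K x ^ (2*k₀) + gauge K (-x) ^ (2*k₀)) ^ 2 -
          (gauge K x ^ (2*(2*k₀)) + gauge K (-x) ^ (2*(2*k₀)))) := by
      rw [hPdef]
      simp only [map_mul, eval_C, map_sub, map_pow]
      rw [← hp₁ x, ← hp₂ x]
    rw [this, ha, hb, hh]
    simp only [mul_pow]
    ring
  have hQe : ∀ x : EuclideanSpace ℝ (Fin n), eval (fun i => x i) Q = h x ^ (2 * k₀ + 1) := by
    intro x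
    have ha : gauge K x ^ (2 * (2 * k₀ + 1)) = (gauge K x ^ (2 * k₀ + 1)) ^ 2 := by
      rw [← pow_mul, Nat.mul_comm]
    have hb : gauge K (-x) ^ (2 * (2 * k₀ + 1)) = (gauge K (-x) ^ (2 * k₀ + 1)) ^ 2 := by
      rw [← pow_mul, Nat.mul_comm]
    have : eval (fun i => x i) Q =
        (1/2 : ℝ) * ((gauge K x ^ (2*(2*k₀+1)) + gauge K (-x) ^ (2*(2*k₀+1))) -
          (gauge K x ^ (2*k₀+1) - gauge K (-x) ^ (2*k₀+1)) ^ 2) := by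
      rw [hQdef]
      simp only [map_mul, eval_C, map_sub, map_pow]
      rw [← hq₁ x, ← hp₃ x]
    rw [this, ha, hb, hh]
    simp only [mul_pow]
    ring
  -- transfer eval identities to arbitrary points of `Fin n → ℝ`
  have hPe' : ∀ y : Fin n → ℝ, eval y P =
      h ((WithLp.equiv 2 (∀ _ : Fin n, ℝ)).symm y) ^ (2 * k₀) := fun y => hPe _
  have hQe' : ∀ y : Fin n → ℝ, eval y Q =
      h ((WithLp.equiv 2 (∀ _ : Fin n, ℝ)).symm y) ^ (2 * k₀ + 1) := fun y => hQe _
  have key : Q ^ (2 * k₀) = P ^ (2 * k₀ + 1) := by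
    apply MvPolynomial.funext
    intro y
    rw [map_pow, map_pow, hPe' y, hQe' y, ← pow_mul, ← pow_mul, Nat.mul_comm]
  by_cases hP0 : P = 0
  · have hzero : ∀ x : EuclideanSpace ℝ (Fin n), x = 0 := by
      intro x
      by_contra hx
      have h1 := hPe x
      rw [hP0] at h1
      simp only [map_zero] at h1
      exact (pow_ne_zero _ (hpos x hx).ne') h1.symm
    refine ⟨0, isHomogeneous_zero _ _ _, fun x hx => absurd (hzero x) hx, fun x => ?_⟩
    rw [hzero x]
    simp [gauge_zero]
  · haveI : Nonempty (GCDMonoid (MvPolynomial (Fin n) ℝ)) :=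
      ⟨UniqueFactorizationMonoid.toGCDMonoid _⟩
    set F := FractionRing (MvPolynomial (Fin n) ℝ)
    set φ := algebraMap (MvPolynomial (Fin n) ℝ) F with hφdef
    have hinj : Function.Injective φ := IsFractionRing.injective _ _
    have hφP : φ P ≠ 0 := fun hc => hP0 (hinj (by simpa using hc))
    set r : F := φ Q / φ P with hrdef
    have hr : r ^ (2 * k₀) = φ P := by
      rw [hrdef, div_pow, ← map_pow, key, map_pow, pow_succ', mul_div_assoc,
        div_self (pow_ne_zero _ hφP), mul_one]
    have hr1 : r ^ (2 * k₀ + 1) = φ Q := by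
      rw [pow_succ, hr, hrdef, ← mul_div_assoc, mul_div_cancel_left₀ _ hφP]
    have hint : IsIntegral (MvPolynomial (Fin n) ℝ) r := by
      refine ⟨Polynomial.X ^ (2 * k₀) - Polynomial.C P,
        Polynomial.monic_X_pow_sub_C _ (by omega), ?_⟩
      simp only [Polynomial.eval₂_sub, Polynomial.eval₂_X_pow, Polynomial.eval₂_C]
      rw [hr]
      exact sub_self _
    obtain ⟨S, hS⟩ := IsIntegrallyClosed.isIntegral_iff.mp hint
    have hSm : S ^ (2 * k₀) = P := hinj (by rw [map_pow, hS, hr])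
    have hSm1 : S ^ (2 * k₀ + 1) = Q := hinj (by rw [map_pow, hS, hr1])
    have hSe : ∀ x : EuclideanSpace ℝ (Fin n), eval (fun i => x i) S = h x := by
      intro x
      have e1 : (eval (fun i => x i) S) ^ (2 * k₀) = h x ^ (2 * k₀) := by
        rw [← map_pow, hSm, hPe]
      have e2 : (eval (fun i => x i) S) ^ (2 * k₀ + 1) = h x ^ (2 * k₀ + 1) := by
        rw [← map_pow, hSm1, hQe]
      by_cases hx : h x = 0
      · rw [hx]
        refine (pow_eq_zero_iff (by omega : 2 * k₀ ≠ 0)).mp ?_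
        rw [e1, hx, zero_pow (by omega : 2 * k₀ ≠ 0)]
      · have hs0 : (h x) ^ (2 * k₀) ≠ 0 := pow_ne_zero _ hx
        rw [pow_succ, pow_succ, e1] at e2
        exact mul_left_cancel₀ hs0 e2
    set N : ℕ := max (S.totalDegree + 1) 3 with hNdef
    have hsumS : ∑ i ∈ Finset.range N, homogeneousComponent i S = S := by
      calc ∑ i ∈ Finset.range N, homogeneousComponent i S
          = ∑ i ∈ Finset.range (S.totalDegree + 1), homogeneousComponent i S :=
            (Finset.sum_subset (Finset.range_subset_range.mpr (le_max_left _ _))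
              (fun i _ hi => homogeneousComponent_eq_zero i S (by
                simp only [Finset.mem_range, not_lt] at hi
                have hN1 : S.totalDegree + 1 <= N := le_max_left _ _
                omega))).symm
        _ = S := sum_homogeneousComponent S
    set B := homogeneousComponent 2 S with hBdef
    have hBe : ∀ x : EuclideanSpace ℝ (Fin n), eval (fun i => x i) B = h x := by
      intro x
      refine coeff_two_of_eq_on_nonneg (N := N)
        (fun i => eval (fun j => x j) (homogeneousComponent i S)) (h x)
        (lt_of_lt_of_le (by norm_num) (le_max_right (S.totalDegree + 1) 3)) ?_
      intro t ht
      have hscale : ∀ i ∈ Finset.range N,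
          eval (fun j => x j) (homogeneousComponent i S) * t ^ i =
          eval (fun j => t * x j) (homogeneousComponent i S) := by
        intro i _
        rw [eval_smul_of_isHomogeneous (homogeneousComponent_isHomogeneous i S) t]
        ring
      rw [Finset.sum_congr rfl hscale, ← map_sum, hsumS]
      have hxt : (fun j => t * x j) = (fun j => (t • x) j) := by
        funext j
        simp
      rw [hxt, hSe (t • x), hh]
      simp only
      rw [show -(t • x) = t • (-x) from (smul_neg t x).symm,
        gauge_smul_of_nonneg ht, gauge_smul_of_nonneg ht, smul_eq_mul, smul_eq_mul]
      ring
    exact ⟨B, homogeneousComponent_isHomogeneous 2 S,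
      fun x hx => (hBe x) ▸ hpos x hx, fun x => (hBe x).symm⟩
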